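/- Minimum rank distance of folded Gabidulin codes: the h-folded Gabidulin code of length g = n/h and dimension k (with h | n, n ≤ m) has minimum rank distance d_r = g − ⌈k/h⌉ + 1. -/

import Mathlib

open Module Matrix

private lemma fgmrd_rank_add_ker {K : Type*} [Field K] {a b : Type*} [Fintype a] [Fintype b]
    [DecidableEq a] (M : Matrix a b K) :
    M.rank + Module.finrank K (LinearMap.ker (Mᵀ.mulVecLin)) = Fintype.card a := by
  rw [← Matrix.rank_transpose M, Matrix.rank]
  rw [LinearMap.finrank_range_add_finrank_ker (Mᵀ.mulVecLin)]
  simp [Module.finrank_pi]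

private lemma fgmrd_pow_li {Fq F : Type*} [Field Fq] [Fintype Fq] [Field F] [Fintype F]
    [Algebra Fq F] (m : ℕ) (hm : Module.finrank Fq F = m) (α : F)
    (hα : ∀ x : F, x ≠ 0 → ∃ i : ℕ, α ^ i = x) :
    LinearIndependent Fq fun i : Fin m => α ^ (i : ℕ) := by
  have hint : IsIntegral Fq α := Algebra.IsIntegral.isIntegral α
  have htop : IntermediateField.adjoin Fq {α} = ⊤ := by
    rw [eq_top_iff]
    intro x _
    rcases eq_or_ne x 0 with rfl | hx
    · exact zero_mem _
    · obtain ⟨i, rfl⟩ := hα x hx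
      exact pow_mem (IntermediateField.mem_adjoin_simple_self Fq α) i
  have hdeg : (minpoly Fq α).natDegree = m := by
    rw [← IntermediateField.adjoin.finrank hint, htop, IntermediateField.finrank_top', hm]
  have := linearIndependent_pow (K := Fq) α
  rw [hdeg] at this
  exact this

private lemma fgmrd_ker_bound {Fq F : Type*} [Field Fq] [Fintype Fq] [Field F] [Fintype F]
    [Algebra Fq F] (k : ℕ) (f : Fin k → F) (hf : f ≠ 0) (L : F →ₗ[Fq] F)
    (hL : ∀ x, L x = ∑ i : Fin k, f i * x ^ (Fintype.card Fq) ^ (i : ℕ)) :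
    Module.finrank Fq (LinearMap.ker L) ≤ k - 1 := by
  classical
  set q := Fintype.card Fq with hq
  have hq2 : 2 ≤ q := Fintype.one_lt_card
  set P : Polynomial F := ∑ i : Fin k, Polynomial.C (f i) * Polynomial.X ^ (q ^ (i : ℕ)) with hP
  obtain ⟨i₀, hi₀⟩ : ∃ i, f i ≠ 0 := by
    by_contra hc
    push_neg at hc
    exact hf (funext hc)
  have hPne : P ≠ 0 := by
    intro h0
    have : P.coeff (q ^ (i₀ : ℕ)) = f i₀ := by
      rw [hP, Polynomial.finset_sum_coeff]
      rw [Finset.sum_eq_single i₀]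
      · simp
      · intro b _ hb
        rw [Polynomial.coeff_C_mul, Polynomial.coeff_X_pow, if_neg, mul_zero]
        intro hpow
        exact hb (Fin.ext (Nat.pow_right_injective hq2 hpow.symm))
      · simp
    rw [h0] at this
    simp at this
    exact hi₀ this.symm
  have hdeg : P.natDegree ≤ q ^ (k - 1) := by
    apply Polynomial.natDegree_sum_le_of_forall_le
    intro i _
    refine le_trans (Polynomial.natDegree_C_mul_le _ _) ?_
    rw [Polynomial.natDegree_X_pow]
    exact Nat.pow_le_pow_right (by omega) (by omega)
  have hroot : ∀ x : F, x ∈ LinearMap.ker L → x ∈ P.roots.toFinset := by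
    intro x hx
    rw [Multiset.mem_toFinset, Polynomial.mem_roots hPne]
    rw [Polynomial.IsRoot, hP]
    rw [Polynomial.eval_finset_sum]
    simp only [Polynomial.eval_mul, Polynomial.eval_C, Polynomial.eval_pow, Polynomial.eval_X]
    rw [← hL x]
    exact hx
  have hcard : Fintype.card (LinearMap.ker L) ≤ q ^ (k - 1) := by
    have : Fintype.card (LinearMap.ker L) ≤ P.roots.toFinset.card := by
      rw [← Fintype.card_coe]
      refine Fintype.card_le_of_injective
        (fun x => (⟨x.1, hroot x.1 x.2⟩ : P.roots.toFinset)) ?_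
      intro a b hab
      exact Subtype.ext (congrArg Subtype.val hab :)
    refine this.trans (le_trans ?_ hdeg)
    exact le_trans (Multiset.toFinset_card_le _) (P.card_roots')
  have hcardeq := card_eq_pow_finrank (K := Fq) (V := LinearMap.ker L)
  rw [hcardeq] at hcard
  have := (Nat.pow_le_pow_iff_right (by omega : 1 < q)).mp hcard
  omega

/-- Minimum rank distance of folded Gabidulin codes: the `h`-folded Gabidulin
code of length `g = n/h` and dimension `k` (with `h | n`, `n ≤ m`, `α` a primitive element of
`F_{q^m}`), whose codewords are the `g×h` matrices with `(i,j)` entry `f(α^{ih+j})` for `f` a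
linearized polynomial of q-degree `< k`, has minimum rank distance `d_r = g − ⌈k/h⌉ + 1`,
where the rank of a codeword is the `F_q`-rank of its `g×(hm)` expansion. -/
theorem folded_gabidulin_minimum_rank_distance (Fq F : Type*) [Field Fq] [Fintype Fq]
    [Field F] [Fintype F] [Algebra Fq F]
    (m n h k : ℕ) (hh0 : 0 < h) (hdvd : h ∣ n) (hnm : n ≤ m) (hk : 0 < k) (hkn : k ≤ n)
    (hm : Module.finrank Fq F = m)
    (β : Basis (Fin m) Fq F) (α : F) (hα : ∀ x : F, x ≠ 0 → ∃ i : ℕ, α ^ i = x) :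
    IsLeast
      { r : ℕ | ∃ f : Fin k → F, f ≠ 0 ∧
          (Matrix.of fun (i : Fin (n / h)) (jb : Fin h × Fin m) =>
            β.repr
              (∑ idx : Fin k,
                f idx * (α ^ ((i : ℕ) * h + (jb.1 : ℕ))) ^ (Fintype.card Fq) ^ (idx : ℕ))
              jb.2).rank = r }
      (n / h - (k + h - 1) / h + 1) := by
  classical
  haveI : FiniteDimensional Fq F := FiniteDimensional.of_finrank_pos (by rw [hm]; omega)
  set g := n / h with hgdef
  have hn : g * h = n := Nat.div_mul_cancel hdvd
  set q := Fintype.card Fq with hq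
  have hq2 : 2 ≤ q := Fintype.one_lt_card
  set s := (k - 1) / h with hs
  have hg0 : 0 < g := Nat.div_pos (Nat.le_of_dvd (by omega) hdvd) hh0
  have hsh : s * h ≤ k - 1 := Nat.div_mul_le_self (k - 1) h
  have hsg : s < g := by
    have h1 : s * h < g * h := by omega
    exact Nat.lt_of_mul_lt_mul_right h1
  -- Frobenius facts
  have hfrobsmul : ∀ (i : ℕ) (c : Fq) (x : F), (c • x) ^ q ^ i = c • x ^ q ^ i := by
    intro i c x
    rw [Algebra.smul_def, mul_pow, ← map_pow, FiniteField.pow_card_pow, Algebra.smul_def]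
  have hfrobadd : ∀ (i : ℕ) (x y : F), (x + y) ^ q ^ i = x ^ q ^ i + y ^ q ^ i := by
    set p := ringChar Fq with hpdef
    haveI : CharP Fq p := ringChar.charP Fq
    haveI hfp : Fact p.Prime := ⟨CharP.char_is_prime Fq p⟩
    haveI : CharP F p := charP_of_injective_ringHom (algebraMap Fq F).injective p
    obtain ⟨r, hr⟩ := FiniteField.card Fq p
    intro i x y
    rw [hq, hr.2, ← pow_mul]
    exact add_pow_char_pow x y p (r * i)
  -- linear independence of powers
  have hLIm : LinearIndependent Fq fun i : Fin m => α ^ (i : ℕ) := fgmrd_pow_li m hm α hα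
  have hLI2 : LinearIndependent Fq fun p : Fin g × Fin h => α ^ ((p.1 : ℕ) * h + (p.2 : ℕ)) := by
    have hlt : ∀ p : Fin g × Fin h, (p.1 : ℕ) * h + (p.2 : ℕ) < m := by
      intro p
      have he : ((p.1 : ℕ) + 1) * h = (p.1 : ℕ) * h + h := by ring
      have h2 : ((p.1 : ℕ) + 1) * h ≤ g * h := Nat.mul_le_mul_right h p.1.2
      have hj := p.2.2
      omega
    have := hLIm.comp (fun p : Fin g × Fin h => (⟨(p.1 : ℕ) * h + (p.2 : ℕ), hlt p⟩ : Fin m))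
      (by
        intro p1 p2 hpe
        have he : (p1.1 : ℕ) * h + (p1.2 : ℕ) = (p2.1 : ℕ) * h + (p2.2 : ℕ) :=
          congrArg Fin.val hpe
        have hj1 := p1.2.2
        have hj2 := p2.2.2
        have e1 : ((p1.1 : ℕ) * h + (p1.2 : ℕ)) / h = (p1.1 : ℕ) := by
          rw [Nat.mul_comm, Nat.mul_add_div hh0, Nat.div_eq_of_lt hj1]; omega
        have e2 : ((p2.1 : ℕ) * h + (p2.2 : ℕ)) / h = (p2.1 : ℕ) := by
          rw [Nat.mul_comm, Nat.mul_add_div hh0, Nat.div_eq_of_lt hj2]; omega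
        have hi : (p1.1 : ℕ) = (p2.1 : ℕ) := by rw [← e1, ← e2, he]
        rw [hi] at he
        have hj : (p1.2 : ℕ) = (p2.2 : ℕ) := by omega
        exact Prod.ext (Fin.ext hi) (Fin.ext hj))
    exact this
  -- the linearized-polynomial evaluation map
  set Lmap : (Fin k → F) → F →ₗ[Fq] F := fun f =>
    { toFun := fun x => ∑ i : Fin k, f i * x ^ q ^ (i : ℕ),
      map_add' := by
        intro x y
        simp only [hfrobadd, mul_add]
        rw [Finset.sum_add_distrib]
      map_smul' := by
        intro c x
        simp only [hfrobsmul, mul_smul_comm, RingHom.id_apply]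
        rw [Finset.smul_sum] } with hLmap
  have hLapp : ∀ (f : Fin k → F) (x : F), Lmap f x = ∑ i : Fin k, f i * x ^ q ^ (i : ℕ) :=
    fun _ _ => rfl
  set MM : (Fin k → F) → Matrix (Fin g) (Fin h × Fin m) Fq := fun f =>
    Matrix.of fun (i : Fin g) (jb : Fin h × Fin m) =>
      β.repr (∑ idx : Fin k, f idx * (α ^ ((i : ℕ) * h + (jb.1 : ℕ))) ^ q ^ (idx : ℕ)) jb.2
    with hMMdef
  have hMMapp : ∀ (f : Fin k → F) (i : Fin g) (jb : Fin h × Fin m),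
      MM f i jb = β.repr (Lmap f (α ^ ((i : ℕ) * h + (jb.1 : ℕ)))) jb.2 := fun _ _ _ => rfl
  set T : (Fin g → Fq) →ₗ[Fq] F :=
    { toFun := fun lam => ∑ i : Fin g, lam i • α ^ ((i : ℕ) * h),
      map_add' := by
        intro x y
        simp only [Pi.add_apply, add_smul]
        rw [Finset.sum_add_distrib]
      map_smul' := by
        intro c x
        simp only [Pi.smul_apply, smul_eq_mul, mul_smul, RingHom.id_apply]
        rw [Finset.smul_sum] } with hT
  have hTapp : ∀ lam : Fin g → Fq, T lam = ∑ i : Fin g, lam i • α ^ ((i : ℕ) * h) :=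
    fun _ => rfl
  -- rank + left kernel = g
  have hA : ∀ f : Fin k → F,
      (MM f).rank + Module.finrank Fq (LinearMap.ker ((MM f)ᵀ.mulVecLin)) = g := by
    intro f
    rw [fgmrd_rank_add_ker]
    simp
  -- lower bound on rank via kernel bound
  have hB : ∀ f : Fin k → F, f ≠ 0 →
      Module.finrank Fq (LinearMap.ker ((MM f)ᵀ.mulVecLin)) ≤ s := by
    intro f hf
    set W := LinearMap.ker ((MM f)ᵀ.mulVecLin) with hW
    have hmemW : ∀ lam : Fin g → Fq, lam ∈ W → ∀ jb : Fin h × Fin m,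
        ∑ i : Fin g, MM f i jb * lam i = 0 := by
      intro lam hlam jb
      have h0 := congrFun (LinearMap.mem_ker.mp hlam) jb
      simp only [Matrix.mulVecLin_apply, Pi.zero_apply] at h0
      have h1 : ((MM f)ᵀ.mulVec lam) jb = ∑ i : Fin g, MM f i jb * lam i := by
        simp only [Matrix.mulVec, dotProduct, Matrix.transpose_apply]
      rw [h1] at h0
      exact h0
    have hWroot : ∀ lam : Fin g → Fq, lam ∈ W → ∀ j : Fin h,
        Lmap f (α ^ (j : ℕ) * T lam) = 0 := by
      intro lam hlam j
      have h1 : α ^ (j : ℕ) * T lam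
          = ∑ i : Fin g, lam i • α ^ ((i : ℕ) * h + (j : ℕ)) := by
        rw [hTapp, Finset.mul_sum]
        refine Finset.sum_congr rfl fun i _ => ?_
        rw [mul_smul_comm, pow_add, mul_comm]
      rw [h1, map_sum]
      simp_rw [_root_.map_smul]
      have hz : β.repr (∑ i : Fin g, lam i • Lmap f (α ^ ((i : ℕ) * h + (j : ℕ)))) = 0 := by
        ext b
        rw [map_sum]
        simp_rw [_root_.map_smul]
        rw [Finset.sum_apply']
        simp_rw [Finsupp.smul_apply, smul_eq_mul]
        have h2 := hmemW lam hlam (j, b)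
        simp_rw [hMMapp f _ (j, b)] at h2
        simpa [mul_comm] using h2
      exact (LinearEquiv.map_eq_zero_iff β.repr).mp hz
    -- the injection from W^h into ker (Lmap f)
    set Ψ : (Fin h → W) →ₗ[Fq] F :=
      { toFun := fun w => ∑ j : Fin h, α ^ (j : ℕ) * T (w j : Fin g → Fq),
        map_add' := by
          intro x y
          simp only [Pi.add_apply, Submodule.coe_add, map_add, mul_add]
          rw [Finset.sum_add_distrib]
        map_smul' := by
          intro c x
          simp only [Pi.smul_apply, SetLike.val_smul, _root_.map_smul, mul_smul_comm,
            RingHom.id_apply]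
          rw [Finset.smul_sum] } with hΨ
    have hΨapp : ∀ w : Fin h → W, Ψ w = ∑ j : Fin h, α ^ (j : ℕ) * T (w j : Fin g → Fq) :=
      fun _ => rfl
    have hΨ0 : ∀ w : Fin h → W, Ψ w ∈ LinearMap.ker (Lmap f) := by
      intro w
      rw [LinearMap.mem_ker, hΨapp, map_sum]
      refine Finset.sum_eq_zero fun j _ => ?_
      exact hWroot _ (w j).2 j
    have hΨinj : Function.Injective Ψ := by
      rw [← LinearMap.ker_eq_bot]
      rw [LinearMap.ker_eq_bot']
      intro w hw
      have e1 : Ψ w = ∑ p : Fin g × Fin h,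
          ((w p.2 : Fin g → Fq) p.1) • α ^ ((p.1 : ℕ) * h + (p.2 : ℕ)) := by
        rw [hΨapp, Fintype.sum_prod_type, Finset.sum_comm]
        refine Finset.sum_congr rfl fun j _ => ?_
        rw [hTapp, Finset.mul_sum]
        refine Finset.sum_congr rfl fun i _ => ?_
        rw [mul_smul_comm, pow_add, mul_comm]
      rw [e1] at hw
      have hz := Fintype.linearIndependent_iff.mp hLI2
        (fun p : Fin g × Fin h => (w p.2 : Fin g → Fq) p.1) hw
      funext j
      refine Subtype.ext (funext fun i => ?_)
      exact hz (i, j)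
    have hr1 : Module.finrank Fq (Fin h → W) ≤ Module.finrank Fq (LinearMap.ker (Lmap f)) := by
      refine LinearMap.finrank_le_finrank_of_injective
        (f := Ψ.codRestrict (LinearMap.ker (Lmap f)) hΨ0) ?_
      intro a b hab
      exact hΨinj (congrArg Subtype.val hab :)
    have hr2 : Module.finrank Fq (Fin h → W) = h * Module.finrank Fq W := by
      rw [Module.finrank_pi_fintype]
      simp [Finset.sum_const, mul_comm]
    have hr3 : Module.finrank Fq (LinearMap.ker (Lmap f)) ≤ k - 1 :=
      fgmrd_ker_bound k f hf (Lmap f) (hLapp f)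
    have : h * Module.finrank Fq W ≤ k - 1 := by omega
    rw [hs]
    rw [Nat.le_div_iff_mul_le hh0]
    have hcomm : Module.finrank Fq W * h = h * Module.finrank Fq W := Nat.mul_comm _ _
    omega
  -- existence of a codeword with large left kernel
  have hC : ∃ f : Fin k → F, f ≠ 0 ∧
      s ≤ Module.finrank Fq (LinearMap.ker ((MM f)ᵀ.mulVecLin)) := by
    set E : (Fin k → F) →ₗ[F] (Fin (s * h) → F) :=
      { toFun := fun f => fun t => ∑ i : Fin k, f i * (α ^ (t : ℕ)) ^ q ^ (i : ℕ),
        map_add' := by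
          intro x y
          funext t
          simp only [Pi.add_apply, add_mul]
          rw [Finset.sum_add_distrib]
        map_smul' := by
          intro c x
          funext t
          simp only [Pi.smul_apply, smul_eq_mul, mul_assoc, RingHom.id_apply]
          rw [Finset.mul_sum] } with hE
    have hnotinj : ¬ Function.Injective E := by
      intro hinj
      have hle := LinearMap.finrank_le_finrank_of_injective hinj
      rw [Module.finrank_pi, Module.finrank_pi] at hle
      simp only [Fintype.card_fin] at hle
      omega
    rw [← LinearMap.ker_eq_bot] at hnotinj
    obtain ⟨f0, hf0mem, hf0ne⟩ := Submodule.exists_mem_ne_zero_of_ne_bot hnotinj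
    refine ⟨f0, hf0ne, ?_⟩
    have hEf0 : ∀ t : Fin (s * h), ∑ i : Fin k, f0 i * (α ^ (t : ℕ)) ^ q ^ (i : ℕ) = 0 := by
      intro t
      have := congrFun (LinearMap.mem_ker.mp hf0mem) t
      simpa [hE] using this
    -- the single vectors e_i for i < s lie in the left kernel
    set v : Fin s → (Fin g → Fq) := fun i =>
      Pi.single (⟨(i : ℕ), lt_of_lt_of_le i.2 hsg.le⟩ : Fin g) 1 with hv
    have hvmem : ∀ i : Fin s, v i ∈ LinearMap.ker ((MM f0)ᵀ.mulVecLin) := by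
      intro i
      rw [LinearMap.mem_ker]
      funext jb
      rw [Matrix.mulVecLin_apply]
      have h1 : (MM f0)ᵀ.mulVec (v i) jb
          = MM f0 (⟨(i : ℕ), lt_of_lt_of_le i.2 hsg.le⟩ : Fin g) jb := by
        rw [Matrix.mulVec, dotProduct]
        rw [Finset.sum_eq_single (⟨(i : ℕ), lt_of_lt_of_le i.2 hsg.le⟩ : Fin g)]
        · simp [hv, Matrix.transpose_apply]
        · intro b _ hb
          simp [hv, Pi.single_apply, hb, Ne.symm hb]
        · simp
      rw [h1]
      have hlt : (i : ℕ) * h + (jb.1 : ℕ) < s * h := by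
        have hi := i.2
        have hj := jb.1.2
        have h2 : ((i : ℕ) + 1) * h ≤ s * h := Nat.mul_le_mul_right h hi
        have he : ((i : ℕ) + 1) * h = (i : ℕ) * h + h := by ring
        omega
      have hz : (∑ idx : Fin k,
          f0 idx * (α ^ ((i : ℕ) * h + (jb.1 : ℕ))) ^ q ^ (idx : ℕ)) = 0 := by
        have := hEf0 ⟨(i : ℕ) * h + (jb.1 : ℕ), hlt⟩
        simpa using this
      show β.repr (∑ idx : Fin k,
          f0 idx * (α ^ ((i : ℕ) * h + (jb.1 : ℕ))) ^ q ^ (idx : ℕ)) jb.2 = 0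
      rw [hz]
      simp
    have hvli : LinearIndependent Fq v := by
      have hbli := (Pi.basisFun Fq (Fin g)).linearIndependent
      have := hbli.comp
        (fun i : Fin s => (⟨(i : ℕ), lt_of_lt_of_le i.2 hsg.le⟩ : Fin g))
        (by
          intro a b hab
          exact Fin.ext (congrArg Fin.val hab :))
      convert this using 1
      funext i
      simp [hv, Function.comp, Pi.basisFun_apply]
    have hspan : Submodule.span Fq (Set.range v) ≤ LinearMap.ker ((MM f0)ᵀ.mulVecLin) := by
      rw [Submodule.span_le]
      rintro _ ⟨i, rfl⟩
      exact hvmem i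
    have h4 : Module.finrank Fq (Submodule.span Fq (Set.range v)) = s := by
      rw [finrank_span_eq_card hvli]
      simp
    have h5 := Submodule.finrank_mono hspan
    omega
  -- putting it together
  have hdiv : (k + h - 1) / h = s + 1 := by
    rw [hs, show k + h - 1 = (k - 1) + h by omega, Nat.add_div_right _ hh0]
  have hval : g - (k + h - 1) / h + 1 = g - s := by
    rw [hdiv]
    omega
  rw [hval]
  constructor
  · obtain ⟨f0, hf0, hsle⟩ := hC
    refine ⟨f0, hf0, ?_⟩
    have h1 := hA f0
    have h2 := hB f0 hf0
    have h3 : (MM f0).rank = g - s := by omega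
    rw [hMMdef] at h3
    exact h3
  · rintro r ⟨f, hf, hr⟩
    have hr' : (MM f).rank = r := by rw [hMMdef]; exact hr
    have h1 := hA f
    have h2 := hB f hf
    omega
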